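/- (Theorem 1, forward stability of IR(ω).) Let ω, ε, L, q be real numbers with 0 < ω < 2, 0 < ε ≤ 0.01, L ≥ 0, 0 ≤ q ≤ 0.1, L·ε·κ(A) ≤ 0.01, and |1-ω| + ω·q ≤ 0.6. Let (x̃_k), (Δr_k), (Δp_k), (D_k^{(1)}), (D_k^{(2)}) satisfy, for every k ∈ ℕ: ‖Δr_k‖ ≤ L·ε·(‖b‖ + ‖A‖·‖x̃_k‖); p*_k = A⁻¹(b - A x̃_k + Δr_k); ‖Δp_k‖ ≤ q·‖p*_k‖; p̃_k = p*_k + Δp_k; ‖D_k^{(i)}‖ ≤ ε for i = 1, 2; and x̃_{k+1} = (I + D_k^{(1)})(x̃_k + (I + D_k^{(2)})·ω·p̃_k); and assume ‖x̃_0 - x*‖ ≤ q·‖x*‖. Then there exists k* ∈ ℕ such that for every k ≥ k*, ‖x̃_k - x*‖ ≤ (11.6·L + 4.2)·ε·κ(A)·‖x*‖. -/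

import Mathlib

open Matrix Filter Topology
set_option maxHeartbeats 1000000
open scoped Matrix.Norms.L2Operator

/-- Matrix–vector multiplication viewed as a map on Euclidean space,
so that `‖·‖` is the Euclidean 2-norm. -/
noncomputable def mulV {n : ℕ} (A : Matrix (Fin n) (Fin n) ℝ)
    (x : EuclideanSpace ℝ (Fin n)) : EuclideanSpace ℝ (Fin n) :=
  (EuclideanSpace.equiv (Fin n) ℝ).symm (A *ᵥ x)

lemma mulV_norm {n : ℕ} (A : Matrix (Fin n) (Fin n) ℝ) (x : EuclideanSpace ℝ (Fin n)) :
    ‖mulV A x‖ ≤ ‖A‖ * ‖x‖ := Matrix.l2_opNorm_mulVec A x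

lemma mulV_add {n : ℕ} (A : Matrix (Fin n) (Fin n) ℝ) (x y : EuclideanSpace ℝ (Fin n)) :
    mulV A (x + y) = mulV A x + mulV A y := by
  simp only [mulV, ← map_add]
  congr 1
  exact Matrix.mulVec_add A x y

lemma mulV_sub {n : ℕ} (A : Matrix (Fin n) (Fin n) ℝ) (x y : EuclideanSpace ℝ (Fin n)) :
    mulV A (x - y) = mulV A x - mulV A y := by
  simp only [mulV, ← map_sub]
  congr 1
  exact Matrix.mulVec_sub A x y

lemma mulV_smul {n : ℕ} (A : Matrix (Fin n) (Fin n) ℝ) (c : ℝ) (x : EuclideanSpace ℝ (Fin n)) :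
    mulV A (c • x) = c • mulV A x := by
  simp only [mulV, ← _root_.map_smul]
  congr 1
  exact Matrix.mulVec_smul A c x

lemma one_add_mulV {n : ℕ} (D : Matrix (Fin n) (Fin n) ℝ) (x : EuclideanSpace ℝ (Fin n)) :
    mulV (1 + D) x = x + mulV D x := by
  simp only [mulV, Matrix.add_mulVec, Matrix.one_mulVec]; rfl

lemma mulV_cancel {n : ℕ} (A : Matrix (Fin n) (Fin n) ℝ) (hA : IsUnit A.det)
    (x : EuclideanSpace ℝ (Fin n)) : mulV A⁻¹ (mulV A x) = x := by
  have h : ((EuclideanSpace.equiv (Fin n) ℝ).symm (A *ᵥ x) : Fin n → ℝ) = A *ᵥ x := rfl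
  simp only [mulV, h, Matrix.mulVec_mulVec, Matrix.nonsing_inv_mul A hA, Matrix.one_mulVec]
  rfl

lemma mulV_cancel' {n : ℕ} (A : Matrix (Fin n) (Fin n) ℝ) (hA : IsUnit A.det)
    (x : EuclideanSpace ℝ (Fin n)) : mulV A (mulV A⁻¹ x) = x := by
  have h : ((EuclideanSpace.equiv (Fin n) ℝ).symm (A⁻¹ *ᵥ x) : Fin n → ℝ) = A⁻¹ *ᵥ x := rfl
  simp only [mulV, h, Matrix.mulVec_mulVec, Matrix.mul_nonsing_inv A hA, Matrix.one_mulVec]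
  rfl


private lemma aux_s1 (ω μ R E X : ℝ) (hω0 : 0 < ω) (hω16 : ω ≤ 1.6) (hμ0 : 0 ≤ μ)
    (hμ : μ ≤ 0.01) (hR0 : 0 ≤ R) (hE0 : 0 ≤ E) (hX0 : 0 ≤ X)
    (f1 : R ≤ μ * (2 * X + E)) :
    ω * R ≤ 0.016 * E + 3.2 * μ * X := by
  nlinarith [mul_le_mul hω16 f1 hR0 (by norm_num : (0:ℝ) ≤ 1.6),
    mul_le_mul_of_nonneg_right hμ hE0, mul_nonneg hμ0 hX0, mul_nonneg hμ0 hE0]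

private lemma aux_s2 (a ω q μ P E X : ℝ) (ha0 : 0 ≤ a) (hω0 : 0 < ω) (hq0 : 0 ≤ q)
    (hωq : a + ω * q ≤ 0.6) (hωq16 : ω * q ≤ 0.16) (hμ0 : 0 ≤ μ)
    (hP0 : 0 ≤ P) (hE0 : 0 ≤ E) (hX0 : 0 ≤ X)
    (hP' : P ≤ 1.01 * E + 2 * μ * X) :
    a * E + ω * (q * P) ≤ 0.606 * E + 0.32 * μ * X := by
  nlinarith [mul_le_mul_of_nonneg_left hP' (mul_nonneg hω0.le hq0),
    mul_nonneg (by linarith : (0:ℝ) ≤ 0.6 - a - ω * q) hE0,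
    mul_nonneg (by linarith : (0:ℝ) ≤ 0.16 - ω * q) (mul_nonneg hμ0 hX0),
    mul_nonneg ha0 hE0]

private lemma aux_s3 (ω ε μ E X P T : ℝ) (hω0 : 0 < ω) (hω16 : ω ≤ 1.6) (hε0 : 0 < ε)
    (hε : ε ≤ 0.01) (hμ0 : 0 ≤ μ) (hμ : μ ≤ 0.01) (hE0 : 0 ≤ E) (hX0 : 0 ≤ X)
    (hP0 : 0 ≤ P) (hT0 : 0 ≤ T)
    (f4' : T ≤ 1.1 * P) (hP' : P ≤ 1.01 * E + 2 * μ * X) :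
    ω * (ε * T) ≤ 0.018 * E + 0.036 * ε * X := by
  nlinarith [mul_nonneg (by linarith : (0:ℝ) ≤ 1.6 - ω) (mul_nonneg hε0.le hT0),
    mul_nonneg hε0.le (by linarith : (0:ℝ) ≤ 1.1 * P - T),
    mul_nonneg hε0.le (by linarith : (0:ℝ) ≤ 1.01 * E + 2 * μ * X - P),
    mul_nonneg (by linarith : (0:ℝ) ≤ 0.01 - ε) hE0,
    mul_nonneg (by linarith : (0:ℝ) ≤ 0.01 - μ) (mul_nonneg hε0.le hX0)]

private lemma aux_fin (ε μ S E X E' : ℝ) (hε0 : 0 < ε) (hε : ε ≤ 0.01) (hμ0 : 0 ≤ μ)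
    (hS0 : 0 ≤ S) (hE0 : 0 ≤ E) (hX0 : 0 ≤ X)
    (f6 : E' ≤ S + ε * (X + S))
    (hSb : S ≤ 0.64 * E + 3.52 * μ * X + 0.036 * ε * X) :
    E' ≤ 0.65 * E + (3.6 * μ + 1.1 * ε) * X := by
  nlinarith [mul_le_mul_of_nonneg_right hε hS0, mul_nonneg hμ0 hX0,
    mul_nonneg hε0.le hX0]

private lemma aux_key (μ ε κ : ℝ) (hμ0 : 0 ≤ μ) (hε0 : 0 < ε) (hκ1 : 1 ≤ κ) :
    (3.6 * μ + 1.1 * ε) * (100 / 35) + ε ≤ 11.6 * μ + 4.2 * (ε * κ) := by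
  nlinarith [mul_nonneg hε0.le (by linarith : (0:ℝ) ≤ κ - 1)]

theorem forward_stability_IR {n : ℕ} (A : Matrix (Fin n) (Fin n) ℝ) (hA : IsUnit A.det)
    (b : EuclideanSpace ℝ (Fin n))
    (xstar : EuclideanSpace ℝ (Fin n)) (hxstar : xstar = mulV A⁻¹ b)
    (ω ε L q : ℝ)
    (hω0 : 0 < ω) (hω2 : ω < 2) (hε0 : 0 < ε) (hε : ε ≤ 0.01) (hL : 0 ≤ L)
    (hq0 : 0 ≤ q) (hq : q ≤ 0.1)
    (hcond : L * ε * (‖A⁻¹‖ * ‖A‖) ≤ 0.01)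
    (hωq : |1 - ω| + ω * q ≤ 0.6)
    (xt Δr Δp pstar pt : ℕ → EuclideanSpace ℝ (Fin n))
    (D₁ D₂ : ℕ → Matrix (Fin n) (Fin n) ℝ)
    (hΔr : ∀ k, ‖Δr k‖ ≤ L * ε * (‖b‖ + ‖A‖ * ‖xt k‖))
    (hpstar : ∀ k, pstar k = mulV A⁻¹ (b - mulV A (xt k) + Δr k))
    (hΔp : ∀ k, ‖Δp k‖ ≤ q * ‖pstar k‖)
    (hpt : ∀ k, pt k = pstar k + Δp k)
    (hD₁ : ∀ k, ‖D₁ k‖ ≤ ε) (hD₂ : ∀ k, ‖D₂ k‖ ≤ ε)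
    (hxt : ∀ k, xt (k + 1) = mulV (1 + D₁ k) (xt k + mulV (1 + D₂ k) (ω • pt k)))
    (hx0 : ‖xt 0 - xstar‖ ≤ q * ‖xstar‖) :
    ∃ kstar : ℕ, ∀ k ≥ kstar,
      ‖xt k - xstar‖ ≤ (11.6 * L + 4.2) * ε * (‖A⁻¹‖ * ‖A‖) * ‖xstar‖ := by
  have hAn : (0:ℝ) ≤ ‖A‖ := norm_nonneg _
  have hAin : (0:ℝ) ≤ ‖A⁻¹‖ := norm_nonneg _
  have hX0 : (0:ℝ) ≤ ‖xstar‖ := norm_nonneg _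
  set μ : ℝ := L * ε * (‖A⁻¹‖ * ‖A‖) with hμdef
  have hμ0 : 0 ≤ μ := by
    rw [hμdef]
    exact mul_nonneg (mul_nonneg hL hε0.le) (mul_nonneg hAin hAn)
  have hμ : μ ≤ 0.01 := hcond
  have hb : b = mulV A xstar := by rw [hxstar, mulV_cancel' A hA]
  have hbn : ‖b‖ ≤ ‖A‖ * ‖xstar‖ := by rw [hb]; exact mulV_norm A xstar
  have habs0 : (0:ℝ) ≤ |1 - ω| := abs_nonneg _
  have hω16 : ω ≤ 1.6 := by
    have h1 : ω - 1 ≤ |1 - ω| := by rw [abs_sub_comm]; exact le_abs_self _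
    linarith [mul_nonneg hω0.le hq0]
  -- the one-step contraction inequality
  have step : ∀ k, ‖xt (k+1) - xstar‖ ≤
      0.65 * ‖xt k - xstar‖ + (3.6 * μ + 1.1 * ε) * ‖xstar‖ := by
    intro k
    have hE0 : (0:ℝ) ≤ ‖xt k - xstar‖ := norm_nonneg _
    have hxtk : ‖xt k‖ ≤ ‖xstar‖ + ‖xt k - xstar‖ := by
      calc ‖xt k‖ = ‖xstar + (xt k - xstar)‖ := by rw [add_sub_cancel]
        _ ≤ ‖xstar‖ + ‖xt k - xstar‖ := norm_add_le _ _
    have hR0 : (0:ℝ) ≤ ‖mulV A⁻¹ (Δr k)‖ := norm_nonneg _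
    have f1 : ‖mulV A⁻¹ (Δr k)‖ ≤ μ * (2 * ‖xstar‖ + ‖xt k - xstar‖) := by
      have hinner : ‖b‖ + ‖A‖ * ‖xt k‖ ≤ ‖A‖ * (2 * ‖xstar‖ + ‖xt k - xstar‖) := by
        have := mul_le_mul_of_nonneg_left hxtk hAn
        linarith [hbn, this]
      have h2 : ‖Δr k‖ ≤ L * ε * (‖A‖ * (2 * ‖xstar‖ + ‖xt k - xstar‖)) :=
        le_trans (hΔr k) (mul_le_mul_of_nonneg_left hinner (mul_nonneg hL hε0.le))
      calc ‖mulV A⁻¹ (Δr k)‖ ≤ ‖A⁻¹‖ * ‖Δr k‖ := mulV_norm _ _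
        _ ≤ ‖A⁻¹‖ * (L * ε * (‖A‖ * (2 * ‖xstar‖ + ‖xt k - xstar‖))) :=
            mul_le_mul_of_nonneg_left h2 hAin
        _ = μ * (2 * ‖xstar‖ + ‖xt k - xstar‖) := by rw [hμdef]; ring
    have hP0 : (0:ℝ) ≤ ‖pstar k‖ := norm_nonneg _
    have hpid : pstar k = (xstar - xt k) + mulV A⁻¹ (Δr k) := by
      rw [hpstar k, mulV_add, mulV_sub, ← hxstar, mulV_cancel A hA]
    have f2 : ‖pstar k‖ ≤ ‖xt k - xstar‖ + ‖mulV A⁻¹ (Δr k)‖ := by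
      calc ‖pstar k‖ = ‖(xstar - xt k) + mulV A⁻¹ (Δr k)‖ := by rw [hpid]
        _ ≤ ‖xstar - xt k‖ + ‖mulV A⁻¹ (Δr k)‖ := norm_add_le _ _
        _ = ‖xt k - xstar‖ + ‖mulV A⁻¹ (Δr k)‖ := by rw [norm_sub_rev]
    have hP' : ‖pstar k‖ ≤ 1.01 * ‖xt k - xstar‖ + 2 * μ * ‖xstar‖ := by
      linarith [f2, f1, mul_le_mul_of_nonneg_right hμ hE0]
    have hT0 : (0:ℝ) ≤ ‖pt k‖ := norm_nonneg _
    have f4 : ‖pt k‖ ≤ (1 + q) * ‖pstar k‖ := by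
      calc ‖pt k‖ = ‖pstar k + Δp k‖ := by rw [hpt k]
        _ ≤ ‖pstar k‖ + ‖Δp k‖ := norm_add_le _ _
        _ ≤ ‖pstar k‖ + q * ‖pstar k‖ := by linarith [hΔp k]
        _ = (1 + q) * ‖pstar k‖ := by ring
    have f4' : ‖pt k‖ ≤ 1.1 * ‖pstar k‖ := by
      linarith [f4, mul_le_mul_of_nonneg_right hq hP0]
    -- identities
    have hid1 : xt (k+1) - xstar =
        ((xt k + mulV (1 + D₂ k) (ω • pt k)) - xstar)
          + mulV (D₁ k) (xt k + mulV (1 + D₂ k) (ω • pt k)) := by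
      rw [hxt k, one_add_mulV]
      abel
    have hys : (xt k + mulV (1 + D₂ k) (ω • pt k)) - xstar =
        (1 - ω) • (xt k - xstar) + ω • (mulV A⁻¹ (Δr k) + Δp k)
          + ω • mulV (D₂ k) (pt k) := by
      rw [one_add_mulV, mulV_smul]
      nth_rewrite 1 [hpt k]
      rw [hpid]
      simp only [smul_add, smul_sub, sub_smul, one_smul]
      abel
    -- norm bound on the "S" part
    have n1 : ‖(1 - ω) • (xt k - xstar)‖ = |1 - ω| * ‖xt k - xstar‖ := by
      rw [norm_smul, Real.norm_eq_abs]
    have n2 : ‖ω • (mulV A⁻¹ (Δr k) + Δp k)‖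
        ≤ ω * (‖mulV A⁻¹ (Δr k)‖ + q * ‖pstar k‖) := by
      rw [norm_smul, Real.norm_eq_abs, abs_of_pos hω0]
      refine mul_le_mul_of_nonneg_left ?_ hω0.le
      calc ‖mulV A⁻¹ (Δr k) + Δp k‖ ≤ ‖mulV A⁻¹ (Δr k)‖ + ‖Δp k‖ := norm_add_le _ _
        _ ≤ ‖mulV A⁻¹ (Δr k)‖ + q * ‖pstar k‖ := by linarith [hΔp k]
    have n3 : ‖ω • mulV (D₂ k) (pt k)‖ ≤ ω * (ε * ‖pt k‖) := by
      rw [norm_smul, Real.norm_eq_abs, abs_of_pos hω0]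
      refine mul_le_mul_of_nonneg_left ?_ hω0.le
      calc ‖mulV (D₂ k) (pt k)‖ ≤ ‖D₂ k‖ * ‖pt k‖ := mulV_norm _ _
        _ ≤ ε * ‖pt k‖ := mul_le_mul_of_nonneg_right (hD₂ k) hT0
    have f5 : ‖(xt k + mulV (1 + D₂ k) (ω • pt k)) - xstar‖
        ≤ |1 - ω| * ‖xt k - xstar‖ + ω * (‖mulV A⁻¹ (Δr k)‖ + q * ‖pstar k‖)
          + ω * (ε * ‖pt k‖) := by
      rw [hys]
      refine le_trans (norm_add_le _ _) ?_
      refine le_trans (add_le_add_left (norm_add_le _ _) _) ?_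
      linarith [n1, n2, n3]
    have hS0 : (0:ℝ) ≤ ‖(xt k + mulV (1 + D₂ k) (ω • pt k)) - xstar‖ := norm_nonneg _
    have f6 : ‖xt (k+1) - xstar‖ ≤ ‖(xt k + mulV (1 + D₂ k) (ω • pt k)) - xstar‖
        + ε * (‖xstar‖ + ‖(xt k + mulV (1 + D₂ k) (ω • pt k)) - xstar‖) := by
      rw [hid1]
      refine le_trans (norm_add_le _ _) ?_
      have hyn : ‖xt k + mulV (1 + D₂ k) (ω • pt k)‖
          ≤ ‖xstar‖ + ‖(xt k + mulV (1 + D₂ k) (ω • pt k)) - xstar‖ := by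
        calc ‖xt k + mulV (1 + D₂ k) (ω • pt k)‖
            = ‖xstar + ((xt k + mulV (1 + D₂ k) (ω • pt k)) - xstar)‖ := by
              rw [add_sub_cancel]
          _ ≤ _ := norm_add_le _ _
      have hd1 : ‖mulV (D₁ k) (xt k + mulV (1 + D₂ k) (ω • pt k))‖
          ≤ ε * (‖xstar‖ + ‖(xt k + mulV (1 + D₂ k) (ω • pt k)) - xstar‖) :=
        (mulV_norm _ _).trans (mul_le_mul (hD₁ k) hyn (norm_nonneg _) hε0.le)
      linarith
    -- numeric estimates
    have s1 : ω * ‖mulV A⁻¹ (Δr k)‖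
        ≤ 0.016 * ‖xt k - xstar‖ + 3.2 * μ * ‖xstar‖ := by
      exact aux_s1 ω μ _ _ _ hω0 hω16 hμ0 hμ hR0 hE0 hX0 f1
    have hωq16 : ω * q ≤ 0.16 := by
      linarith [mul_le_mul hω16 hq hq0 (by norm_num : (0:ℝ) ≤ 1.6)]
    have s2 : |1 - ω| * ‖xt k - xstar‖ + ω * (q * ‖pstar k‖)
        ≤ 0.606 * ‖xt k - xstar‖ + 0.32 * μ * ‖xstar‖ := by
      exact aux_s2 _ ω q μ _ _ _ habs0 hω0 hq0 hωq hωq16 hμ0 hP0 hE0 hX0 hP'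
    have s3 : ω * (ε * ‖pt k‖) ≤ 0.018 * ‖xt k - xstar‖ + 0.036 * ε * ‖xstar‖ := by
      exact aux_s3 ω ε μ _ _ _ _ hω0 hω16 hε0 hε hμ0 hμ hE0 hX0 hP0 hT0 f4' hP'
    have hSb : ‖(xt k + mulV (1 + D₂ k) (ω • pt k)) - xstar‖
        ≤ 0.64 * ‖xt k - xstar‖ + 3.52 * μ * ‖xstar‖ + 0.036 * ε * ‖xstar‖ := by
      linarith [f5, s1, s2, s3]
    exact aux_fin ε μ _ _ _ _ hε0 hε hμ0 hS0 hE0 hX0 f6 hSb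
  -- geometric decay by induction
  have hC0 : (0:ℝ) ≤ (3.6 * μ + 1.1 * ε) * (100 / 35) * ‖xstar‖ := by
    have : (0:ℝ) ≤ 3.6 * μ + 1.1 * ε := by linarith
    positivity
  have ind : ∀ k, ‖xt k - xstar‖
      ≤ 0.65 ^ k * ‖xt 0 - xstar‖ + (3.6 * μ + 1.1 * ε) * (100 / 35) * ‖xstar‖ := by
    intro k
    induction k with
    | zero =>
      simp only [pow_zero, one_mul]
      linarith [hC0]
    | succ k ih =>
      calc ‖xt (k+1) - xstar‖
          ≤ 0.65 * ‖xt k - xstar‖ + (3.6 * μ + 1.1 * ε) * ‖xstar‖ := step k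
        _ ≤ 0.65 * (0.65 ^ k * ‖xt 0 - xstar‖ + (3.6 * μ + 1.1 * ε) * (100 / 35) * ‖xstar‖)
              + (3.6 * μ + 1.1 * ε) * ‖xstar‖ := by linarith
        _ = 0.65 ^ (k+1) * ‖xt 0 - xstar‖ + (3.6 * μ + 1.1 * ε) * (100 / 35) * ‖xstar‖ := by
            rw [pow_succ]; ring
  by_cases hX : ‖xstar‖ = 0
  · refine ⟨0, fun k _ => ?_⟩
    have hE00 : ‖xt 0 - xstar‖ = 0 := by
      have h := hx0; rw [hX] at h
      exact le_antisymm (by linarith) (norm_nonneg _)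
    have h1 := ind k
    rw [hX, hE00] at h1
    rw [hX]
    linarith [h1]
  · have hXpos : 0 < ‖xstar‖ := lt_of_le_of_ne hX0 (Ne.symm hX)
    have hκ1 : 1 ≤ ‖A⁻¹‖ * ‖A‖ := by
      have h1 : ‖xstar‖ ≤ ‖A⁻¹‖ * (‖A‖ * ‖xstar‖) := by
        calc ‖xstar‖ = ‖mulV A⁻¹ (mulV A xstar)‖ := by rw [mulV_cancel A hA]
          _ ≤ ‖A⁻¹‖ * ‖mulV A xstar‖ := mulV_norm _ _
          _ ≤ ‖A⁻¹‖ * (‖A‖ * ‖xstar‖) := mul_le_mul_of_nonneg_left (mulV_norm _ _) hAin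
      nlinarith
    have hgap : (3.6 * μ + 1.1 * ε) * (100 / 35) * ‖xstar‖ + ε * ‖xstar‖
        ≤ (11.6 * L + 4.2) * ε * (‖A⁻¹‖ * ‖A‖) * ‖xstar‖ := by
      have hεκ : ε ≤ ε * (‖A⁻¹‖ * ‖A‖) := by
        linarith [mul_le_mul_of_nonneg_left hκ1 hε0.le]
      have key : (3.6 * μ + 1.1 * ε) * (100 / 35) + ε ≤ (11.6 * L + 4.2) * ε * (‖A⁻¹‖ * ‖A‖) := by
        have hexp : (11.6 * L + 4.2) * ε * (‖A⁻¹‖ * ‖A‖)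
            = 11.6 * μ + 4.2 * (ε * (‖A⁻¹‖ * ‖A‖)) := by rw [hμdef]; ring
        rw [hexp]
        exact aux_key μ ε _ hμ0 hε0 hκ1
      linarith [mul_le_mul_of_nonneg_right key hXpos.le]

    have htend : Tendsto (fun k : ℕ => (0.65:ℝ) ^ k * ‖xt 0 - xstar‖) atTop (𝓝 0) := by
      have := (tendsto_pow_atTop_nhds_zero_of_lt_one (by norm_num : (0:ℝ) ≤ 0.65)
        (by norm_num : (0.65:ℝ) < 1)).mul_const ‖xt 0 - xstar‖
      simpa using this
    have hev : ∀ᶠ k in atTop, (0.65:ℝ) ^ k * ‖xt 0 - xstar‖ < ε * ‖xstar‖ :=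
      htend.eventually_lt_const (by positivity)
    obtain ⟨kstar, hks⟩ := eventually_atTop.mp hev
    refine ⟨kstar, fun k hk => ?_⟩
    have h1 := ind k
    have h2 := hks k hk
    linarith [h1, h2, hgap]
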